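/- For polytopes P and Q and any ℓ ∈ ℕ, the ℓ-flag polynomial of the Cartesian product satisfies f̃^ℓ_{P×Q}(x_1,…,x_ℓ) = f̃^ℓ_P(x_1,…,x_ℓ) · f̃^ℓ_Q(x_1,…,x_ℓ). -/
import Mathlib


open Classical in
/-- The `ℓ`-flag polynomial of a finite "face poset" `F` (faces ordered by `le`,
with dimension function `dim`): the sum over `ℓ`-chains `A₁ ≤ ⋯ ≤ A_ℓ` of faces of
the monomial `x₁^{dim A₁} x₂^{dim A₂ − dim A₁} ⋯ x_ℓ^{dim A_ℓ − dim A_{ℓ−1}}`. -/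
noncomputable def flagPoly (F : Type) [Fintype F] (le : F → F → Prop) (dim : F → ℕ)
    (ℓ : ℕ) : MvPolynomial (Fin ℓ) ℤ :=
  ∑ A ∈ Finset.univ.filter (fun A : Fin ℓ → F => ∀ i j : Fin ℓ, i ≤ j → le (A i) (A j)),
    ∏ i : Fin ℓ,
      (MvPolynomial.X i : MvPolynomial (Fin ℓ) ℤ) ^
        (dim (A i) -
          (if i.val = 0 then 0
           else dim (A ⟨i.val - 1, Nat.lt_of_le_of_lt (Nat.sub_le _ _) i.isLt⟩)))

/-- Flag polynomials are multiplicative over Cartesian products: faces of `P × Q`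
are pairs of faces ordered componentwise, with dimension the sum of dimensions. -/
theorem stmt3 (P Q : Type) [Fintype P] [Fintype Q]
    (leP : P → P → Prop) (leQ : Q → Q → Prop) (dimP : P → ℕ) (dimQ : Q → ℕ)
    (hP : ∀ a b, leP a b → dimP a ≤ dimP b) (hQ : ∀ a b, leQ a b → dimQ a ≤ dimQ b)
    (ℓ : ℕ) :
    flagPoly (P × Q) (fun x y => leP x.1 y.1 ∧ leQ x.2 y.2)
      (fun x => dimP x.1 + dimQ x.2) ℓ
    = flagPoly P leP dimP ℓ * flagPoly Q leQ dimQ ℓ := by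
  classical
  unfold flagPoly
  rw [Finset.sum_mul_sum, ← Finset.sum_product']
  refine Finset.sum_nbij' (fun C => (fun i => (C i).1, fun i => (C i).2))
    (fun p => fun i => (p.1 i, p.2 i)) ?_ ?_ ?_ ?_ ?_
  · intro C hC
    simp only [Finset.mem_filter, Finset.mem_univ, true_and, Finset.mem_product] at hC ⊢
    exact ⟨fun i j hij => (hC i j hij).1, fun i j hij => (hC i j hij).2⟩
  · intro p hp
    simp only [Finset.mem_filter, Finset.mem_univ, true_and, Finset.mem_product] at hp ⊢
    exact fun i j hij => ⟨hp.1 i j hij, hp.2 i j hij⟩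
  · intro C _; rfl
  · intro p _; rfl
  · intro C hC
    simp only [Finset.mem_filter, Finset.mem_univ, true_and] at hC
    rw [← Finset.prod_mul_distrib]
    refine Finset.prod_congr rfl fun i _ => ?_
    rw [← pow_add]
    congr 1
    by_cases h0 : i.val = 0
    · simp [h0]
    · simp only [h0, if_neg, if_false]
      have hle := hC ⟨i.val - 1, Nat.lt_of_le_of_lt (Nat.sub_le _ _) i.isLt⟩ i
        (by simp [Fin.le_def])
      have h1 := hP _ _ hle.1
      have h2 := hQ _ _ hle.2
      omega
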